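/- (Symbol by block replacement.) Let Σ and I be alphabets, let L be a positive integer, and for each symbol i ∈ I let A_i be a string of length L over Σ. Let a = a₁a₂…aₙ and b = b₁b₂…b_m be nonempty strings over I. Assume α ∈ (0, 1/7), R ≥ 2, and that for all indices i, j with a_i ≠ b_j and for all substrings C and D consisting of consecutive symbols from A_{a_i} and A_{b_j}, respectively, with |C|, |D| ≥ L/R, we have f̄(C,D) ≥ α. Then f̄(A_{a₁}A_{a₂}⋯A_{aₙ}, A_{b₁}A_{b₂}⋯A_{b_m}) > α·f̄(a₁a₂…aₙ, b₁b₂…b_m) − 1/R, where A_{a₁}A_{a₂}⋯A_{aₙ} denotes the concatenation of the blocks A_{a₁},…,A_{aₙ}. -/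

import Mathlib

/-- A match between two strings `a` and `b`: a finite set of pairs of (0-based) indices,
strictly increasing in both coordinates simultaneously, matching equal symbols. -/
def IsMatch {α : Type*} (a b : List α) (M : Finset (ℕ × ℕ)) : Prop :=
  (∀ p ∈ M, p.1 < a.length ∧ p.2 < b.length ∧ a[p.1]? = b[p.2]?) ∧
  (∀ p ∈ M, ∀ q ∈ M, (p.1 < q.1 ↔ p.2 < q.2))

/-- The maximal cardinality of a match between `a` and `b`. -/
noncomputable def maxMatch {α : Type*} (a b : List α) : ℕ :=
  sSup {r : ℕ | ∃ M : Finset (ℕ × ℕ), IsMatch a b M ∧ M.card = r}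

/-- The `f̄` distance between two strings:
`f̄(a,b) = 1 - 2 · max{|M| : M a match between a and b} / (|a| + |b|)`. -/
noncomputable def fbar {α : Type*} (a b : List α) : ℝ :=
  1 - 2 * (maxMatch a b : ℝ) / ((a.length : ℝ) + (b.length : ℝ))

section Basic
variable {γ : Type*} {a b : List γ} {M : Finset (ℕ × ℕ)}

lemma isMatch_ext (h : IsMatch a b M) {p q : ℕ × ℕ} (hp : p ∈ M) (hq : q ∈ M) :
    p.1 = q.1 → p = q := by
  intro h1
  have h2 := h.2 p hp q hq
  have h3 := h.2 q hq p hp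
  have : p.2 = q.2 := by omega
  exact Prod.ext h1 this

lemma isMatch_card_le (h : IsMatch a b M) : M.card ≤ a.length := by
  have hinj : Set.InjOn Prod.fst M := fun p hp q hq he => isMatch_ext h hp hq he
  calc M.card = (M.image Prod.fst).card := (Finset.card_image_of_injOn hinj).symm
    _ ≤ (Finset.range a.length).card := by
        apply Finset.card_le_card
        intro x hx
        simp only [Finset.mem_image] at hx
        obtain ⟨p, hp, rfl⟩ := hx
        exact Finset.mem_range.mpr (h.1 p hp).1
    _ = a.length := Finset.card_range _

lemma matchSet_nonempty (a b : List γ) :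
    {r : ℕ | ∃ M : Finset (ℕ × ℕ), IsMatch a b M ∧ M.card = r}.Nonempty :=
  ⟨0, ∅, ⟨by simp, by simp⟩, by simp⟩

lemma matchSet_bddAbove (a b : List γ) :
    BddAbove {r : ℕ | ∃ M : Finset (ℕ × ℕ), IsMatch a b M ∧ M.card = r} := by
  refine ⟨a.length, ?_⟩
  rintro r ⟨M, hM, rfl⟩
  exact isMatch_card_le hM

lemma exists_maxMatch (a b : List γ) :
    ∃ M : Finset (ℕ × ℕ), IsMatch a b M ∧ M.card = maxMatch a b :=
  Nat.sSup_mem (matchSet_nonempty a b) (matchSet_bddAbove a b)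

lemma card_le_maxMatch (h : IsMatch a b M) : M.card ≤ maxMatch a b :=
  le_csSup (matchSet_bddAbove a b) ⟨M, h, rfl⟩

/-- Transport a match along index maps. -/
lemma isMatch_image {x y x' y' : List γ} {M : Finset (ℕ × ℕ)} (h : IsMatch x y M)
    (f g : ℕ → ℕ)
    (hf : ∀ p ∈ M, ∀ q ∈ M, (p.1 < q.1 ↔ f p.1 < f q.1))
    (hg : ∀ p ∈ M, ∀ q ∈ M, (p.2 < q.2 ↔ g p.2 < g q.2))
    (hx : ∀ p ∈ M, f p.1 < x'.length ∧ g p.2 < y'.length ∧ x'[f p.1]? = y'[g p.2]?) :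
    IsMatch x' y' (M.image fun p => (f p.1, g p.2)) ∧
      (M.image fun p => (f p.1, g p.2)).card = M.card := by
  constructor
  · constructor
    · intro p hp
      simp only [Finset.mem_image] at hp
      obtain ⟨q, hq, rfl⟩ := hp
      exact hx q hq
    · intro p hp q hq
      simp only [Finset.mem_image] at hp hq
      obtain ⟨p', hp', rfl⟩ := hp
      obtain ⟨q', hq', rfl⟩ := hq
      simp only
      rw [← hf p' hp' q' hq', ← hg p' hp' q' hq']
      exact h.2 p' hp' q' hq'
  · apply Finset.card_image_of_injOn
    intro p hp q hq he
    simp only [Prod.mk.injEq] at he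
    have h1 : p.1 = q.1 := by
      have := hf p hp q hq; have := hf q hq p hp; omega
    exact isMatch_ext h hp hq h1

end Basic

section Flatten
variable {S I : Type*}

lemma length_flatten_map (L : ℕ) (A : I → List S) (hA : ∀ i, (A i).length = L)
    (a : List I) : (a.map A).flatten.length = a.length * L := by
  induction a with
  | nil => simp
  | cons s t ih => simp [ih, hA s]; ring

lemma getElem?_flatten_map (L : ℕ) (hL : 0 < L) (A : I → List S)
    (hA : ∀ i, (A i).length = L) (a : List I) (p : ℕ) :
    (a.map A).flatten[p]? = a[p / L]?.bind (fun s => (A s)[p % L]?) := by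
  induction a generalizing p with
  | nil => simp
  | cons s t ih =>
    simp only [List.map_cons, List.flatten_cons]
    by_cases hp : p < L
    · rw [List.getElem?_append_left (by rw [hA s]; exact hp)]
      rw [Nat.div_eq_of_lt hp, Nat.mod_eq_of_lt hp]
      simp
    · push_neg at hp
      rw [List.getElem?_append_right (by rw [hA s]; exact hp)]
      rw [hA s, ih (p - L)]
      rw [Nat.div_eq_sub_div hL hp, Nat.mod_eq_sub_mod hp]
      simp
end Flatten

/-- Key combinatorial lemma: on a monotone ("staircase") set of cells with all strict
chains of size ≤ k and row/column weight sums ≤ L, the total weight is ≤ k*L. -/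
lemma stair_sum (L : ℕ) (w : ℕ × ℕ → ℕ) :
    ∀ (k : ℕ) (W : Finset (ℕ × ℕ)),
    (∀ c ∈ W, ∀ c' ∈ W, c.1 < c'.1 → c.2 ≤ c'.2) →
    (∀ C : Finset (ℕ × ℕ), C ⊆ W →
      (∀ c ∈ C, ∀ c' ∈ C, c ≠ c' →
        (c.1 < c'.1 ∧ c.2 < c'.2) ∨ (c'.1 < c.1 ∧ c'.2 < c.2)) → C.card ≤ k) →
    (∀ i, ∑ c ∈ W.filter (fun c => c.1 = i), w c ≤ L) →
    (∀ j, ∑ c ∈ W.filter (fun c => c.2 = j), w c ≤ L) →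
    ∑ c ∈ W, w c ≤ k * L := by
  intro k
  induction k with
  | zero =>
    intro W hmono hchain hrow hcol
    have hW : W = ∅ := by
      by_contra hne
      obtain ⟨c, hc⟩ := Finset.nonempty_iff_ne_empty.mpr hne
      have := hchain {c} (Finset.singleton_subset_iff.mpr hc)
        (by intro x hx y hy hxy; simp at hx hy; subst hx; subst hy; exact absurd rfl hxy)
      simp at this
    simp [hW]
  | succ k ih =>
    intro W hmono hchain hrow hcol
    classical
    set T : Finset (ℕ × ℕ) :=
      W.filter (fun c => ∀ c' ∈ W, ¬(c.1 < c'.1 ∧ c.2 < c'.2)) with hT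
    -- every cell reaches a maximal cell
    have reach : ∀ N, ∀ c ∈ W,
        (W.filter (fun e => c.1 < e.1 ∧ c.2 < e.2)).card ≤ N →
        ∃ d ∈ T, c = d ∨ (c.1 < d.1 ∧ c.2 < d.2) := by
      intro N
      induction N with
      | zero =>
        intro c hc hcard
        by_cases hmax : ∀ c' ∈ W, ¬(c.1 < c'.1 ∧ c.2 < c'.2)
        · exact ⟨c, Finset.mem_filter.mpr ⟨hc, hmax⟩, Or.inl rfl⟩
        · push_neg at hmax
          obtain ⟨c', hc', h1, h2⟩ := hmax
          exfalso
          have : c' ∈ W.filter (fun e => c.1 < e.1 ∧ c.2 < e.2) :=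
            Finset.mem_filter.mpr ⟨hc', h1, h2⟩
          have := Finset.card_pos.mpr ⟨c', this⟩
          omega
      | succ N ihN =>
        intro c hc hcard
        by_cases hmax : ∀ c' ∈ W, ¬(c.1 < c'.1 ∧ c.2 < c'.2)
        · exact ⟨c, Finset.mem_filter.mpr ⟨hc, hmax⟩, Or.inl rfl⟩
        · push_neg at hmax
          obtain ⟨c', hc', h1, h2⟩ := hmax
          have hsub : W.filter (fun e => c'.1 < e.1 ∧ c'.2 < e.2) ⊆
              (W.filter (fun e => c.1 < e.1 ∧ c.2 < e.2)).erase c' := by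
            intro e he
            rw [Finset.mem_filter] at he
            refine Finset.mem_erase.mpr ⟨?_, Finset.mem_filter.mpr ⟨he.1, by omega⟩⟩
            rintro rfl; omega
          have hc'mem : c' ∈ W.filter (fun e => c.1 < e.1 ∧ c.2 < e.2) :=
            Finset.mem_filter.mpr ⟨hc', h1, h2⟩
          have hcard' : (W.filter (fun e => c'.1 < e.1 ∧ c'.2 < e.2)).card ≤ N := by
            have h3 := Finset.card_le_card hsub
            have h4 := Finset.card_erase_of_mem hc'mem
            have h5 := Finset.card_pos.mpr ⟨c', hc'mem⟩
            omega
          obtain ⟨d, hd, hdd⟩ := ihN c' hc' hcard'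
          refine ⟨d, hd, Or.inr ?_⟩
          rcases hdd with rfl | hlt
          · exact ⟨h1, h2⟩
          · omega
    have reach' : ∀ c ∈ W, ∃ d ∈ T, c = d ∨ (c.1 < d.1 ∧ c.2 < d.2) := fun c hc =>
      reach _ c hc le_rfl
    -- T is contained in a single row or column
    have hTsum : ∑ c ∈ T, w c ≤ L := by
      rcases Finset.eq_empty_or_nonempty T with hTe | ⟨t₀, ht₀⟩
      · simp [hTe]
      · have hTW : T ⊆ W := Finset.filter_subset _ _
        have hanti : ∀ s ∈ T, ∀ u ∈ T, s.1 ≠ u.1 → s.2 = u.2 := by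
          intro s hs u hu hne
          have hs' := Finset.mem_filter.mp hs
          have hu' := Finset.mem_filter.mp hu
          rcases Nat.lt_or_ge s.1 u.1 with hlt | hge
          · have := hmono s hs'.1 u hu'.1 hlt
            have := hs'.2 u hu'.1
            omega
          · have hlt : u.1 < s.1 := by omega
            have := hmono u hu'.1 s hs'.1 hlt
            have := hu'.2 s hs'.1
            omega
        by_cases hallrow : ∀ c ∈ T, c.1 = t₀.1
        · calc ∑ c ∈ T, w c ≤ ∑ c ∈ W.filter (fun c => c.1 = t₀.1), w c := by
                apply Finset.sum_le_sum_of_subset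
                intro c hc
                exact Finset.mem_filter.mpr ⟨hTW hc, hallrow c hc⟩
            _ ≤ L := hrow t₀.1
        · push_neg at hallrow
          obtain ⟨t₁, ht₁, hne1⟩ := hallrow
          have hcol0 : ∀ c ∈ T, c.2 = t₀.2 := by
            intro c hc
            by_cases h : c.1 = t₀.1
            · have h2 : c.1 ≠ t₁.1 := by
                intro h3
                exact hne1 (by omega)
              have := hanti c hc t₁ ht₁ h2
              have := hanti t₁ ht₁ t₀ ht₀ (by omega)
              omega
            · exact hanti c hc t₀ ht₀ h
          calc ∑ c ∈ T, w c ≤ ∑ c ∈ W.filter (fun c => c.2 = t₀.2), w c := by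
                apply Finset.sum_le_sum_of_subset
                intro c hc
                exact Finset.mem_filter.mpr ⟨hTW hc, hcol0 c hc⟩
            _ ≤ L := hcol t₀.2
    -- W \ T has chains of size ≤ k
    have hchain' : ∀ C : Finset (ℕ × ℕ), C ⊆ W \ T →
        (∀ c ∈ C, ∀ c' ∈ C, c ≠ c' →
          (c.1 < c'.1 ∧ c.2 < c'.2) ∨ (c'.1 < c.1 ∧ c'.2 < c.2)) → C.card ≤ k := by
      intro C hCsub hCchain
      rcases Finset.eq_empty_or_nonempty C with rfl | hCne
      · simp
      · obtain ⟨c₀, hc₀, hc₀max⟩ := Finset.exists_max_image C (fun c => c.1) hCne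
        have hc₀W : c₀ ∈ W \ T := hCsub hc₀
        have hc₀W' : c₀ ∈ W := (Finset.mem_sdiff.mp hc₀W).1
        have hc₀T : c₀ ∉ T := (Finset.mem_sdiff.mp hc₀W).2
        have : ∃ e ∈ W, c₀.1 < e.1 ∧ c₀.2 < e.2 := by
          by_contra hcon
          push_neg at hcon
          exact hc₀T (Finset.mem_filter.mpr ⟨hc₀W', fun c' hc' h => by
            have := hcon c' hc'; omega⟩)
        obtain ⟨e, heW, he1, he2⟩ := this
        obtain ⟨d, hdT, hdd⟩ := reach' e heW
        have hcd : c₀.1 < d.1 ∧ c₀.2 < d.2 := by rcases hdd with rfl | h <;> omega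
        have hdC : d ∉ C := by
          intro h
          exact (Finset.mem_sdiff.mp (hCsub h)).2 hdT
        have hins : insert d C ⊆ W := by
          intro c hc
          rcases Finset.mem_insert.mp hc with rfl | hc
          · exact Finset.mem_filter.mp hdT |>.1
          · exact (Finset.mem_sdiff.mp (hCsub hc)).1
        have hinschain : ∀ c ∈ insert d C, ∀ c' ∈ insert d C, c ≠ c' →
            (c.1 < c'.1 ∧ c.2 < c'.2) ∨ (c'.1 < c.1 ∧ c'.2 < c.2) := by
          have habove : ∀ c ∈ C, c.1 < d.1 ∧ c.2 < d.2 := by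
            intro c hc
            by_cases hcc : c = c₀
            · subst hcc; exact hcd
            · rcases hCchain c hc c₀ hc₀ hcc with h | h
              · omega
              · have := hc₀max c hc; omega
          intro c hc c' hc' hne
          rcases Finset.mem_insert.mp hc with rfl | hcC
          · rcases Finset.mem_insert.mp hc' with rfl | hc'C
            · exact absurd rfl hne
            · have := habove c' hc'C; omega
          · rcases Finset.mem_insert.mp hc' with rfl | hc'C
            · have := habove c hcC; omega
            · exact hCchain c hcC c' hc'C hne
        have := hchain (insert d C) hins hinschain
        rw [Finset.card_insert_of_notMem hdC] at this
        omega
    have hWT := ih (W \ T)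
      (fun c hc c' hc' h => hmono c (Finset.mem_sdiff.mp hc).1 c' (Finset.mem_sdiff.mp hc').1 h)
      hchain'
      (fun i => le_trans (Finset.sum_le_sum_of_subset (by
        intro c hc
        rw [Finset.mem_filter] at hc ⊢
        exact ⟨(Finset.mem_sdiff.mp hc.1).1, hc.2⟩)) (hrow i))
      (fun j => le_trans (Finset.sum_le_sum_of_subset (by
        intro c hc
        rw [Finset.mem_filter] at hc ⊢
        exact ⟨(Finset.mem_sdiff.mp hc.1).1, hc.2⟩)) (hcol j))
    have hsplit : ∑ c ∈ W \ T, w c + ∑ c ∈ T, w c = ∑ c ∈ W, w c :=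
      Finset.sum_sdiff (Finset.filter_subset _ _)
    have hmul : (k+1)*L = k*L + L := by ring
    omega

lemma arith_small (α t x y mc : ℝ) (hx : mc ≤ x) (hy : mc ≤ y) (ht : mc ≤ t)
    (h0 : 0 ≤ α) (h1 : α ≤ 1) : mc ≤ (1-α)/2 * (x+y) + α * t := by
  nlinarith [mul_nonneg (sub_nonneg.mpr h1) (by linarith : (0:ℝ) ≤ x + y - 2*mc),
    mul_nonneg h0 (by linarith : (0:ℝ) ≤ t - mc)]

lemma arith_big (α x y mc u s : ℝ) (hm : mc ≤ u) (h2 : 2*u ≤ (1-α)*(x+y)) (hs : 0 ≤ s) :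
    mc ≤ (1-α)/2 * (x+y) + s := by nlinarith [h2, hm, hs]

lemma arith_final (α R N M' L K Sg Sb X Y B k' : ℝ)
    (hK : K = Sg + Sb)
    (hSb : Sb ≤ (1-α)/2 * (X+Y) + B * (α*(L/R)))
    (hX : Sg + X ≤ N*L) (hY : Sg + Y ≤ M'*L) (hSg : Sg ≤ k'*L) (hB : B ≤ N+M'-1)
    (hB0 : 0 ≤ B)
    (hα0 : 0 < α) (hα7 : α < 1/7) (hR : 2 ≤ R) (hN : 1 ≤ N) (hM : 1 ≤ M') (hL : 1 ≤ L) :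
    K < (1-α+1/R) * ((N+M')*L)/2 + α*(k'*L) := by
  have hR0 : (0:ℝ) < R := by linarith
  have key : α*(N+M'-1) < (N+M')/2 := by
    have h1 : α*(N+M'-1) < 1/7*(N+M'-1) :=
      mul_lt_mul_of_pos_right hα7 (by linarith)
    linarith
  have h2 : (1-α)/2*(X+Y) ≤ (1-α)/2*((N+M')*L - 2*Sg) :=
    mul_le_mul_of_nonneg_left (by linarith) (by linarith)
  have h3 : B*(α*(L/R)) ≤ (N+M'-1)*(α*(L/R)) :=
    mul_le_mul_of_nonneg_right hB (by positivity)
  have h4 : (N+M'-1)*(α*(L/R)) < ((N+M')/2)*(L/R) := by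
    have hLR : (0:ℝ) < L/R := by positivity
    have h5 := mul_lt_mul_of_pos_right key hLR
    calc (N+M'-1)*(α*(L/R)) = (α*(N+M'-1))*(L/R) := by ring
      _ < ((N+M')/2)*(L/R) := h5
  have h5 : α*Sg ≤ α*(k'*L) := mul_le_mul_of_nonneg_left hSg (le_of_lt hα0)
  have e1 : Sg + (1-α)/2*((N+M')*L - 2*Sg) + ((N+M')/2)*(L/R)
      = α*Sg + (1-α+1/R)*((N+M')*L)/2 := by field_simp; ring
  linarith [hSb, h2, h3, h4, h5, e1]

lemma arith_conv (α R q L K k' : ℝ) (hq : 0 < q) (hL : 0 < L) (hR : 0 < R)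
    (hK : K < (1-α+1/R) * (q*L)/2 + α*(k'*L)) :
    1 - 2*K/(q*L) > α * (1 - 2*k'/q) - 1/R := by
  have hqL : 0 < q*L := mul_pos hq hL
  have h2 : 2*K/(q*L) < 1-α+1/R + 2*α*k'/q := by
    rw [div_lt_iff₀ hqL]
    have e : (1-α+1/R + 2*α*k'/q)*(q*L) = (1-α+1/R)*(q*L) + 2*(α*(k'*L)) := by
      field_simp
    rw [e]
    linarith [hK]
  have e2 : α * (1 - 2*k'/q) = α - 2*α*k'/q := by ring
  linarith [h2]

set_option maxHeartbeats 4000000 in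
/-- Symbol by block replacement: replacing symbols by blocks of equal length `L` whose
substantial substrings are `α`-separated in `f̄` yields
`f̄(A_{a₁}⋯A_{aₙ}, A_{b₁}⋯A_{b_m}) > α·f̄(a,b) − 1/R`. -/
theorem fbar_symbol_by_block_replacement {S I : Type*} (L : ℕ) (hL : 0 < L)
    (A : I → List S) (hA : ∀ i, (A i).length = L)
    (a b : List I) (ha : a ≠ []) (hb : b ≠ [])
    (α : ℝ) (hα0 : 0 < α) (hα7 : α < 1 / 7) (R : ℝ) (hR : 2 ≤ R)
    (hsep : ∀ s ∈ a, ∀ t ∈ b, s ≠ t → ∀ C D : List S, C <:+: A s → D <:+: A t →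
      (L : ℝ) / R ≤ (C.length : ℝ) → (L : ℝ) / R ≤ (D.length : ℝ) → α ≤ fbar C D) :
    fbar (a.map A).flatten (b.map A).flatten > α * fbar a b - 1 / R := by
  classical
  set n := a.length with hn_def
  set m := b.length with hm_def
  have hn : 0 < n := List.length_pos_of_ne_nil ha
  have hm : 0 < m := List.length_pos_of_ne_nil hb
  have hR0 : (0:ℝ) < R := by linarith
  obtain ⟨M, hM, hMcard⟩ := exists_maxMatch (a.map A).flatten (b.map A).flatten
  have hlenA : (a.map A).flatten.length = n * L := length_flatten_map L A hA a
  have hlenB : (b.map A).flatten.length = m * L := length_flatten_map L A hA b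
  set k := maxMatch a b with hk_def
  -- cells
  set Mc : ℕ × ℕ → Finset (ℕ × ℕ) :=
    fun c => M.filter (fun p => (p.1 / L, p.2 / L) = c) with hMc_def
  set grid := Finset.range n ×ˢ Finset.range m with hgrid_def
  set W := grid.filter (fun c => (Mc c).Nonempty) with hW_def
  have hMcM : ∀ c, Mc c ⊆ M := fun c => Finset.filter_subset _ _
  have hMcMatch : ∀ c, IsMatch (a.map A).flatten (b.map A).flatten (Mc c) := by
    intro c
    exact ⟨fun p hp => hM.1 p (hMcM c hp), fun p hp q hq => hM.2 p (hMcM c hp) q (hMcM c hq)⟩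
  -- membership facts
  have hcell : ∀ c, ∀ p ∈ Mc c, p ∈ M ∧ p.1 / L = c.1 ∧ p.2 / L = c.2 := by
    intro c p hp
    rw [hMc_def] at hp
    simp only [Finset.mem_filter, Prod.ext_iff] at hp
    exact ⟨hp.1, hp.2.1, hp.2.2⟩
  have hMbound : ∀ p ∈ M, p.1 < n * L ∧ p.2 < m * L := by
    intro p hp
    have := hM.1 p hp
    rw [hlenA, hlenB] at this
    exact ⟨this.1, this.2.1⟩
  -- fiberwise decomposition
  have hKsum : M.card = ∑ c ∈ grid, (Mc c).card := by
    simp only [hMc_def]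
    refine Finset.card_eq_sum_card_fiberwise (f := fun p : ℕ × ℕ => (p.1 / L, p.2 / L)) ?_
    intro p hp
    have h1 := (hMbound p hp).1
    have h2 := (hMbound p hp).2
    rw [hgrid_def]
    exact Finset.mem_product.mpr ⟨Finset.mem_range.mpr ((Nat.div_lt_iff_lt_mul hL).mpr h1),
      Finset.mem_range.mpr ((Nat.div_lt_iff_lt_mul hL).mpr h2)⟩
  have hKsumW : M.card = ∑ c ∈ W, (Mc c).card := by
    rw [hKsum]
    refine (Finset.sum_subset (Finset.filter_subset _ _) ?_).symm
    intro c hc hnc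
    have : ¬ (Mc c).Nonempty := by
      intro h
      exact hnc (Finset.mem_filter.mpr ⟨hc, h⟩)
    rw [Finset.not_nonempty_iff_eq_empty] at this
    simp [this]
  have hWgrid : W ⊆ grid := Finset.filter_subset _ _
  have hWne : ∀ c ∈ W, (Mc c).Nonempty := fun c hc => (Finset.mem_filter.mp hc).2
  have hWlt : ∀ c ∈ W, c.1 < n ∧ c.2 < m := by
    intro c hc
    have := hWgrid hc
    rw [hgrid_def, Finset.mem_product] at this
    exact ⟨Finset.mem_range.mp this.1, Finset.mem_range.mp this.2⟩
  -- images of positions within blocks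
  set P : ℕ × ℕ → Finset ℕ := fun c => (Mc c).image (fun p => p.1 % L) with hP_def
  set Q : ℕ × ℕ → Finset ℕ := fun c => (Mc c).image (fun p => p.2 % L) with hQ_def
  set u₁ : ℕ × ℕ → ℕ := fun c => sInf ↑(P c) with hu₁_def
  set v₁ : ℕ × ℕ → ℕ := fun c => sSup ↑(P c) with hv₁_def
  set u₂ : ℕ × ℕ → ℕ := fun c => sInf ↑(Q c) with hu₂_def
  set v₂ : ℕ × ℕ → ℕ := fun c => sSup ↑(Q c) with hv₂_def
  set x : ℕ × ℕ → ℕ := fun c => (Finset.Icc (u₁ c) (v₁ c)).card with hx_def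
  set y : ℕ × ℕ → ℕ := fun c => (Finset.Icc (u₂ c) (v₂ c)).card with hy_def
  have hPmem : ∀ c, ∀ p ∈ Mc c, p.1 % L ∈ P c := by
    intro c p hp
    rw [hP_def]
    exact Finset.mem_image.mpr ⟨p, hp, rfl⟩
  have hQmem : ∀ c, ∀ p ∈ Mc c, p.2 % L ∈ Q c := by
    intro c p hp
    rw [hQ_def]
    exact Finset.mem_image.mpr ⟨p, hp, rfl⟩
  have hPL : ∀ c, ∀ t ∈ P c, t < L := by
    intro c t ht
    rw [hP_def] at ht
    obtain ⟨p, _, rfl⟩ := Finset.mem_image.mp ht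
    exact Nat.mod_lt _ hL
  have hQL : ∀ c, ∀ t ∈ Q c, t < L := by
    intro c t ht
    rw [hQ_def] at ht
    obtain ⟨p, _, rfl⟩ := Finset.mem_image.mp ht
    exact Nat.mod_lt _ hL
  have hu₁mem : ∀ c ∈ W, u₁ c ∈ P c := by
    intro c hc
    have : (↑(P c) : Set ℕ).Nonempty := by
      obtain ⟨p, hp⟩ := hWne c hc
      exact ⟨p.1 % L, hPmem c p hp⟩
    exact Nat.sInf_mem this
  have hv₁mem : ∀ c ∈ W, v₁ c ∈ P c := by
    intro c hc
    have h1 : (↑(P c) : Set ℕ).Nonempty := by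
      obtain ⟨p, hp⟩ := hWne c hc
      exact ⟨p.1 % L, hPmem c p hp⟩
    exact Nat.sSup_mem h1 (P c).bddAbove
  have hu₂mem : ∀ c ∈ W, u₂ c ∈ Q c := by
    intro c hc
    have : (↑(Q c) : Set ℕ).Nonempty := by
      obtain ⟨p, hp⟩ := hWne c hc
      exact ⟨p.2 % L, hQmem c p hp⟩
    exact Nat.sInf_mem this
  have hv₂mem : ∀ c ∈ W, v₂ c ∈ Q c := by
    intro c hc
    have h1 : (↑(Q c) : Set ℕ).Nonempty := by
      obtain ⟨p, hp⟩ := hWne c hc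
      exact ⟨p.2 % L, hQmem c p hp⟩
    exact Nat.sSup_mem h1 (Q c).bddAbove
  have hu₁le : ∀ c, ∀ t ∈ P c, u₁ c ≤ t := fun c t ht => Nat.sInf_le ht
  have hv₁ge : ∀ c, ∀ t ∈ P c, t ≤ v₁ c := fun c t ht =>
    le_csSup (P c).bddAbove ht
  have hu₂le : ∀ c, ∀ t ∈ Q c, u₂ c ≤ t := fun c t ht => Nat.sInf_le ht
  have hv₂ge : ∀ c, ∀ t ∈ Q c, t ≤ v₂ c := fun c t ht =>
    le_csSup (Q c).bddAbove ht
  -- cardinalities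
  have hPcard : ∀ c, (P c).card = (Mc c).card := by
    intro c
    rw [hP_def]
    apply Finset.card_image_of_injOn
    intro p hp q hq he
    simp only at he
    have hp' := hcell c p hp
    have hq' := hcell c q hq
    have e1 : L * (p.1 / L) + p.1 % L = p.1 := Nat.div_add_mod _ _
    have e2 : L * (q.1 / L) + q.1 % L = q.1 := Nat.div_add_mod _ _
    have e3 : p.1 / L = q.1 / L := by omega
    rw [e3] at e1
    exact isMatch_ext hM (hMcM c hp) (hMcM c hq) (by omega)
  have hQcard : ∀ c, (Q c).card = (Mc c).card := by
    intro c
    rw [hQ_def]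
    apply Finset.card_image_of_injOn
    intro p hp q hq he
    simp only at he
    have hp' := hcell c p hp
    have hq' := hcell c q hq
    have e1 : L * (p.2 / L) + p.2 % L = p.2 := Nat.div_add_mod _ _
    have e2 : L * (q.2 / L) + q.2 % L = q.2 := Nat.div_add_mod _ _
    have e3 : p.2 / L = q.2 / L := by omega
    rw [e3] at e1
    have h2 : p.2 = q.2 := by omega
    have h3 := hM.2 p (hMcM c hp) q (hMcM c hq)
    have h4 := hM.2 q (hMcM c hq) p (hMcM c hp)
    have h1 : p.1 = q.1 := by omega
    exact isMatch_ext hM (hMcM c hp) (hMcM c hq) h1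
  have hmx : ∀ c ∈ W, (Mc c).card ≤ x c := by
    intro c hc
    rw [← hPcard c, hx_def]
    apply Finset.card_le_card
    intro t ht
    exact Finset.mem_Icc.mpr ⟨hu₁le c t ht, hv₁ge c t ht⟩
  have hmy : ∀ c ∈ W, (Mc c).card ≤ y c := by
    intro c hc
    rw [← hQcard c, hy_def]
    apply Finset.card_le_card
    intro t ht
    exact Finset.mem_Icc.mpr ⟨hu₂le c t ht, hv₂ge c t ht⟩
  -- ordering of P-values along a row
  have hordP : ∀ c ∈ W, ∀ c' ∈ W, c.1 = c'.1 → c.2 < c'.2 →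
      ∀ t ∈ P c, ∀ t' ∈ P c', t < t' := by
    intro c hc c' hc' hrow hlt t ht t' ht'
    rw [hP_def] at ht ht'
    obtain ⟨p, hp, rfl⟩ := Finset.mem_image.mp ht
    obtain ⟨q, hq, rfl⟩ := Finset.mem_image.mp ht'
    have hp' := hcell c p hp
    have hq' := hcell c' q hq
    have h2 : p.2 < q.2 := by
      by_contra hcon
      push_neg at hcon
      have := Nat.div_le_div_right (c := L) hcon
      omega
    have h1 : p.1 < q.1 := (hM.2 p (hMcM c hp) q (hMcM c' hq)).mpr h2
    have e1 : L * (p.1 / L) + p.1 % L = p.1 := Nat.div_add_mod _ _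
    have e2 : L * (q.1 / L) + q.1 % L = q.1 := Nat.div_add_mod _ _
    have e3 : p.1 / L = q.1 / L := by omega
    rw [e3] at e1
    omega
  have hordQ : ∀ c ∈ W, ∀ c' ∈ W, c.2 = c'.2 → c.1 < c'.1 →
      ∀ t ∈ Q c, ∀ t' ∈ Q c', t < t' := by
    intro c hc c' hc' hcol hlt t ht t' ht'
    rw [hQ_def] at ht ht'
    obtain ⟨p, hp, rfl⟩ := Finset.mem_image.mp ht
    obtain ⟨q, hq, rfl⟩ := Finset.mem_image.mp ht'
    have hp' := hcell c p hp
    have hq' := hcell c' q hq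
    have h1 : p.1 < q.1 := by
      by_contra hcon
      push_neg at hcon
      have := Nat.div_le_div_right (c := L) hcon
      omega
    have h2 : p.2 < q.2 := (hM.2 p (hMcM c hp) q (hMcM c' hq)).mp h1
    have e1 : L * (p.2 / L) + p.2 % L = p.2 := Nat.div_add_mod _ _
    have e2 : L * (q.2 / L) + q.2 % L = q.2 := Nat.div_add_mod _ _
    have e3 : p.2 / L = q.2 / L := by omega
    rw [e3] at e1
    omega
  -- the staircase property of W
  have hWmono : ∀ c ∈ W, ∀ c' ∈ W, c.1 < c'.1 → c.2 ≤ c'.2 := by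
    intro c hc c' hc' hlt
    obtain ⟨p, hp⟩ := hWne c hc
    obtain ⟨q, hq⟩ := hWne c' hc'
    have hp' := hcell c p hp
    have hq' := hcell c' q hq
    have h1 : p.1 < q.1 := by
      by_contra hcon
      push_neg at hcon
      have := Nat.div_le_div_right (c := L) hcon
      omega
    have h2 : p.2 < q.2 := (hM.2 p (hMcM c hp) q (hMcM c' hq)).mp h1
    have := Nat.div_le_div_right (c := L) (le_of_lt h2)
    omega
  -- row sums of x
  have hrowx : ∀ i, ∑ c ∈ W.filter (fun c => c.1 = i), x c ≤ L := by
    intro i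
    have hdisj : ∀ c ∈ W.filter (fun c => c.1 = i), ∀ c' ∈ W.filter (fun c => c.1 = i),
        c ≠ c' → Disjoint (Finset.Icc (u₁ c) (v₁ c)) (Finset.Icc (u₁ c') (v₁ c')) := by
      intro c hc c' hc' hne
      rw [Finset.mem_filter] at hc hc'
      have hrow : c.1 = c'.1 := by rw [hc.2, hc'.2]
      have hne2 : c.2 ≠ c'.2 := by
        intro h
        exact hne (Prod.ext hrow h)
      rcases Nat.lt_or_ge c.2 c'.2 with h | h
      · rw [Finset.disjoint_left]
        intro t ht ht'
        rw [Finset.mem_Icc] at ht ht'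
        have := hordP c hc.1 c' hc'.1 hrow h (v₁ c) (hv₁mem c hc.1) (u₁ c') (hu₁mem c' hc'.1)
        omega
      · have h2 : c'.2 < c.2 := by omega
        rw [Finset.disjoint_right]
        intro t ht ht'
        rw [Finset.mem_Icc] at ht ht'
        have := hordP c' hc'.1 c hc.1 hrow.symm h2 (v₁ c') (hv₁mem c' hc'.1) (u₁ c) (hu₁mem c hc.1)
        omega
    calc ∑ c ∈ W.filter (fun c => c.1 = i), x c
        = ((W.filter (fun c => c.1 = i)).biUnion (fun c => Finset.Icc (u₁ c) (v₁ c))).card := by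
          rw [Finset.card_biUnion hdisj]
      _ ≤ (Finset.range L).card := by
          apply Finset.card_le_card
          intro t ht
          rw [Finset.mem_biUnion] at ht
          obtain ⟨c, hc, ht⟩ := ht
          rw [Finset.mem_Icc] at ht
          rw [Finset.mem_range]
          have hcW := (Finset.mem_filter.mp hc).1
          have := hPL c (v₁ c) (hv₁mem c hcW)
          omega
      _ = L := Finset.card_range L
  have hcoly : ∀ j, ∑ c ∈ W.filter (fun c => c.2 = j), y c ≤ L := by
    intro j
    have hdisj : ∀ c ∈ W.filter (fun c => c.2 = j), ∀ c' ∈ W.filter (fun c => c.2 = j),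
        c ≠ c' → Disjoint (Finset.Icc (u₂ c) (v₂ c)) (Finset.Icc (u₂ c') (v₂ c')) := by
      intro c hc c' hc' hne
      rw [Finset.mem_filter] at hc hc'
      have hcol : c.2 = c'.2 := by rw [hc.2, hc'.2]
      have hne2 : c.1 ≠ c'.1 := by
        intro h
        exact hne (Prod.ext h hcol)
      rcases Nat.lt_or_ge c.1 c'.1 with h | h
      · rw [Finset.disjoint_left]
        intro t ht ht'
        rw [Finset.mem_Icc] at ht ht'
        have := hordQ c hc.1 c' hc'.1 hcol h (v₂ c) (hv₂mem c hc.1) (u₂ c') (hu₂mem c' hc'.1)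
        omega
      · have h2 : c'.1 < c.1 := by omega
        rw [Finset.disjoint_right]
        intro t ht ht'
        rw [Finset.mem_Icc] at ht ht'
        have := hordQ c' hc'.1 c hc.1 hcol.symm h2 (v₂ c') (hv₂mem c' hc'.1) (u₂ c) (hu₂mem c hc.1)
        omega
    calc ∑ c ∈ W.filter (fun c => c.2 = j), y c
        = ((W.filter (fun c => c.2 = j)).biUnion (fun c => Finset.Icc (u₂ c) (v₂ c))).card := by
          rw [Finset.card_biUnion hdisj]
      _ ≤ (Finset.range L).card := by
          apply Finset.card_le_card
          intro t ht
          rw [Finset.mem_biUnion] at ht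
          obtain ⟨c, hc, ht⟩ := ht
          rw [Finset.mem_Icc] at ht
          rw [Finset.mem_range]
          have hcW := (Finset.mem_filter.mp hc).1
          have := hQL c (v₂ c) (hv₂mem c hcW)
          omega
      _ = L := Finset.card_range L
  -- good and bad cells
  set Wg := W.filter (fun c => a[c.1]? = b[c.2]?) with hWg_def
  set Wb := W.filter (fun c => ¬ (a[c.1]? = b[c.2]?)) with hWb_def
  have hWgW : Wg ⊆ W := by rw [hWg_def]; exact Finset.filter_subset _ _
  have hWbW : Wb ⊆ W := by rw [hWb_def]; exact Finset.filter_subset _ _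
  -- good cells: stair bound
  have hSg : ∑ c ∈ Wg, (Mc c).card ≤ k * L := by
    apply stair_sum L (fun c => (Mc c).card) k Wg
    · intro c hc c' hc' h
      exact hWmono c (hWgW hc) c' (hWgW hc') h
    · intro C hC hchainC
      rw [hk_def]
      apply card_le_maxMatch (a := a) (b := b)
      constructor
      · intro p hp
        have hpW : p ∈ W := hWgW (hC hp)
        have hlt := hWlt p hpW
        have hg : a[p.1]? = b[p.2]? := by
          have := hC hp
          rw [hWg_def, Finset.mem_filter] at this
          exact this.2
        exact ⟨hlt.1, hlt.2, hg⟩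
      · intro p hp q hq
        by_cases hpq : p = q
        · subst hpq; simp
        · rcases hchainC p hp q hq hpq with ⟨h1, h2⟩ | ⟨h1, h2⟩ <;>
            constructor <;> intro <;> omega
    · intro i
      calc ∑ c ∈ Wg.filter (fun c => c.1 = i), (Mc c).card
          ≤ ∑ c ∈ Wg.filter (fun c => c.1 = i), x c :=
            Finset.sum_le_sum (fun c hc => hmx c (hWgW (Finset.mem_filter.mp hc).1))
        _ ≤ ∑ c ∈ W.filter (fun c => c.1 = i), x c :=
            Finset.sum_le_sum_of_subset (Finset.filter_subset_filter _ hWgW)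
        _ ≤ L := hrowx i
    · intro j
      calc ∑ c ∈ Wg.filter (fun c => c.2 = j), (Mc c).card
          ≤ ∑ c ∈ Wg.filter (fun c => c.2 = j), y c :=
            Finset.sum_le_sum (fun c hc => hmy c (hWgW (Finset.mem_filter.mp hc).1))
        _ ≤ ∑ c ∈ W.filter (fun c => c.2 = j), y c :=
            Finset.sum_le_sum_of_subset (Finset.filter_subset_filter _ hWgW)
        _ ≤ L := hcoly j
  -- the number of occupied cells
  have hWcard : W.card ≤ n + m - 1 := by
    have hinj : Set.InjOn (fun c : ℕ × ℕ => c.1 + c.2) W := by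
      intro c hc c' hc' he
      simp only at he
      by_contra hne
      rcases Nat.lt_trichotomy c.1 c'.1 with h | h | h
      · have := hWmono c hc c' hc' h; omega
      · exact hne (Prod.ext h (by omega))
      · have := hWmono c' hc' c hc h; omega
    calc W.card = (W.image (fun c => c.1 + c.2)).card :=
          (Finset.card_image_of_injOn hinj).symm
      _ ≤ (Finset.range (n + m - 1)).card := by
          apply Finset.card_le_card
          intro t ht
          obtain ⟨c, hc, rfl⟩ := Finset.mem_image.mp ht
          have := hWlt c hc
          rw [Finset.mem_range]
          omega
      _ = n + m - 1 := Finset.card_range _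
  -- row/column double counting
  have hrowsplit : ∀ i, ∑ c ∈ Wg.filter (fun c => c.1 = i), (Mc c).card
      + ∑ c ∈ Wb.filter (fun c => c.1 = i), x c ≤ L := by
    intro i
    have hsp := Finset.sum_filter_add_sum_filter_not (W.filter (fun c => c.1 = i))
      (fun c => a[c.1]? = b[c.2]?) x
    have hc1 : (W.filter (fun c => c.1 = i)).filter (fun c => a[c.1]? = b[c.2]?)
        = Wg.filter (fun c => c.1 = i) := by
      rw [hWg_def, Finset.filter_comm]
    have hc2 : (W.filter (fun c => c.1 = i)).filter (fun c => ¬ (a[c.1]? = b[c.2]?))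
        = Wb.filter (fun c => c.1 = i) := by
      rw [hWb_def, Finset.filter_comm]
    rw [hc1, hc2] at hsp
    have h1 : ∑ c ∈ Wg.filter (fun c => c.1 = i), (Mc c).card
        ≤ ∑ c ∈ Wg.filter (fun c => c.1 = i), x c :=
      Finset.sum_le_sum (fun c hc => hmx c (hWgW (Finset.mem_filter.mp hc).1))
    have h2 := hrowx i
    omega
  have hcolsplit : ∀ j, ∑ c ∈ Wg.filter (fun c => c.2 = j), (Mc c).card
      + ∑ c ∈ Wb.filter (fun c => c.2 = j), y c ≤ L := by
    intro j
    have hsp := Finset.sum_filter_add_sum_filter_not (W.filter (fun c => c.2 = j))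
      (fun c => a[c.1]? = b[c.2]?) y
    have hc1 : (W.filter (fun c => c.2 = j)).filter (fun c => a[c.1]? = b[c.2]?)
        = Wg.filter (fun c => c.2 = j) := by
      rw [hWg_def, Finset.filter_comm]
    have hc2 : (W.filter (fun c => c.2 = j)).filter (fun c => ¬ (a[c.1]? = b[c.2]?))
        = Wb.filter (fun c => c.2 = j) := by
      rw [hWb_def, Finset.filter_comm]
    rw [hc1, hc2] at hsp
    have h1 : ∑ c ∈ Wg.filter (fun c => c.2 = j), (Mc c).card
        ≤ ∑ c ∈ Wg.filter (fun c => c.2 = j), y c :=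
      Finset.sum_le_sum (fun c hc => hmy c (hWgW (Finset.mem_filter.mp hc).1))
    have h2 := hcoly j
    omega
  have hfibg : ∑ i ∈ Finset.range n, ∑ c ∈ Wg.filter (fun c => c.1 = i), (Mc c).card
      = ∑ c ∈ Wg, (Mc c).card :=
    Finset.sum_fiberwise_of_maps_to (g := fun c => c.1)
      (fun c hc => Finset.mem_range.mpr (hWlt c (hWgW hc)).1) _
  have hfibbx : ∑ i ∈ Finset.range n, ∑ c ∈ Wb.filter (fun c => c.1 = i), x c
      = ∑ c ∈ Wb, x c :=
    Finset.sum_fiberwise_of_maps_to (g := fun c => c.1)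
      (fun c hc => Finset.mem_range.mpr (hWlt c (hWbW hc)).1) _
  have hfibg2 : ∑ j ∈ Finset.range m, ∑ c ∈ Wg.filter (fun c => c.2 = j), (Mc c).card
      = ∑ c ∈ Wg, (Mc c).card :=
    Finset.sum_fiberwise_of_maps_to (g := fun c => c.2)
      (fun c hc => Finset.mem_range.mpr (hWlt c (hWgW hc)).2) _
  have hfibby : ∑ j ∈ Finset.range m, ∑ c ∈ Wb.filter (fun c => c.2 = j), y c
      = ∑ c ∈ Wb, y c :=
    Finset.sum_fiberwise_of_maps_to (g := fun c => c.2)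
      (fun c hc => Finset.mem_range.mpr (hWlt c (hWbW hc)).2) _
  have hgx : ∑ c ∈ Wg, (Mc c).card + ∑ c ∈ Wb, x c ≤ n * L := by
    rw [← hfibg, ← hfibbx, ← Finset.sum_add_distrib]
    calc ∑ i ∈ Finset.range n, (∑ c ∈ Wg.filter (fun c => c.1 = i), (Mc c).card
          + ∑ c ∈ Wb.filter (fun c => c.1 = i), x c)
        ≤ ∑ _i ∈ Finset.range n, L := Finset.sum_le_sum (fun i _ => hrowsplit i)
      _ = n * L := by rw [Finset.sum_const, Finset.card_range, smul_eq_mul]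
  have hgy : ∑ c ∈ Wg, (Mc c).card + ∑ c ∈ Wb, y c ≤ m * L := by
    rw [← hfibg2, ← hfibby, ← Finset.sum_add_distrib]
    calc ∑ j ∈ Finset.range m, (∑ c ∈ Wg.filter (fun c => c.2 = j), (Mc c).card
          + ∑ c ∈ Wb.filter (fun c => c.2 = j), y c)
        ≤ ∑ _j ∈ Finset.range m, L := Finset.sum_le_sum (fun j _ => hcolsplit j)
      _ = m * L := by rw [Finset.sum_const, Finset.card_range, smul_eq_mul]
  have hKgb : M.card = ∑ c ∈ Wg, (Mc c).card + ∑ c ∈ Wb, (Mc c).card := by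
    rw [hKsumW, hWg_def, hWb_def]
    exact (Finset.sum_filter_add_sum_filter_not W _ _).symm
  -- per-cell bound on bad cells
  have hbad : ∀ c ∈ Wb, ((Mc c).card : ℝ)
      ≤ (1 - α) / 2 * ((x c : ℝ) + (y c : ℝ)) + α * ((L : ℝ) / R) := by
    intro c hc
    have hcW : c ∈ W := hWbW hc
    have hcbad : ¬ (a[c.1]? = b[c.2]?) := by
      rw [hWb_def, Finset.mem_filter] at hc
      exact hc.2
    obtain ⟨hi, hj⟩ := hWlt c hcW
    have hi' : c.1 < a.length := hi
    have hj' : c.2 < b.length := hj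
    set s := a[c.1]'hi' with hs_def
    set t := b[c.2]'hj' with ht_def
    have hsa : a[c.1]? = some s := List.getElem?_eq_getElem hi'
    have htb : b[c.2]? = some t := List.getElem?_eq_getElem hj'
    have hst : s ≠ t := fun h => hcbad (by rw [hsa, htb, h])
    have hu₁v₁ : u₁ c ≤ v₁ c := hv₁ge c (u₁ c) (hu₁mem c hcW)
    have hv₁L : v₁ c < L := hPL c (v₁ c) (hv₁mem c hcW)
    have hu₂v₂ : u₂ c ≤ v₂ c := hv₂ge c (u₂ c) (hu₂mem c hcW)
    have hv₂L : v₂ c < L := hQL c (v₂ c) (hv₂mem c hcW)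
    have hxc : x c = v₁ c + 1 - u₁ c := by simp only [hx_def]; rw [Nat.card_Icc]
    have hyc : y c = v₂ c + 1 - u₂ c := by simp only [hy_def]; rw [Nat.card_Icc]
    have hx1 : 1 ≤ x c := by omega
    have hy1 : 1 ≤ y c := by omega
    set C : List S := ((A s).drop (u₁ c)).take (x c) with hC_def
    set D : List S := ((A t).drop (u₂ c)).take (y c) with hD_def
    have hClen : C.length = x c := by
      rw [hC_def, List.length_take, List.length_drop, hA s]
      omega
    have hDlen : D.length = y c := by
      rw [hD_def, List.length_take, List.length_drop, hA t]
      omega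
    have hCinf : C <:+: A s :=
      (List.take_prefix _ _).isInfix.trans (List.drop_suffix _ _).isInfix
    have hDinf : D <:+: A t :=
      (List.take_prefix _ _).isInfix.trans (List.drop_suffix _ _).isInfix
    have hfc : ∀ p ∈ Mc c, ∀ q ∈ Mc c,
        (p.1 < q.1 ↔ p.1 % L - u₁ c < q.1 % L - u₁ c) := by
      intro p hp q hq
      have hp' := hcell c p hp
      have hq' := hcell c q hq
      have hup : u₁ c ≤ p.1 % L := hu₁le c _ (hPmem c p hp)
      have huq : u₁ c ≤ q.1 % L := hu₁le c _ (hPmem c q hq)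
      have e1 : L * (p.1 / L) + p.1 % L = p.1 := Nat.div_add_mod _ _
      have e2 : L * (q.1 / L) + q.1 % L = q.1 := Nat.div_add_mod _ _
      have e3 : p.1 / L = q.1 / L := by omega
      rw [e3] at e1
      omega
    have hgc : ∀ p ∈ Mc c, ∀ q ∈ Mc c,
        (p.2 < q.2 ↔ p.2 % L - u₂ c < q.2 % L - u₂ c) := by
      intro p hp q hq
      have hp' := hcell c p hp
      have hq' := hcell c q hq
      have hup : u₂ c ≤ p.2 % L := hu₂le c _ (hQmem c p hp)
      have huq : u₂ c ≤ q.2 % L := hu₂le c _ (hQmem c q hq)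
      have e1 : L * (p.2 / L) + p.2 % L = p.2 := Nat.div_add_mod _ _
      have e2 : L * (q.2 / L) + q.2 % L = q.2 := Nat.div_add_mod _ _
      have e3 : p.2 / L = q.2 / L := by omega
      rw [e3] at e1
      omega
    have hglue : ∀ p ∈ Mc c, p.1 % L - u₁ c < C.length ∧ p.2 % L - u₂ c < D.length ∧
        C[p.1 % L - u₁ c]? = D[p.2 % L - u₂ c]? := by
      intro p hp
      have hp' := hcell c p hp
      have hup := hu₁le c _ (hPmem c p hp)
      have hvp := hv₁ge c _ (hPmem c p hp)
      have huq := hu₂le c _ (hQmem c p hp)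
      have hvq := hv₂ge c _ (hQmem c p hp)
      refine ⟨by rw [hClen]; omega, by rw [hDlen]; omega, ?_⟩
      have hCget : C[p.1 % L - u₁ c]? = (A s)[p.1 % L]? := by
        rw [hC_def, List.getElem?_take_of_lt (by omega), List.getElem?_drop]
        congr 1
        omega
      have hDget : D[p.2 % L - u₂ c]? = (A t)[p.2 % L]? := by
        rw [hD_def, List.getElem?_take_of_lt (by omega), List.getElem?_drop]
        congr 1
        omega
      have hflatA : (a.map A).flatten[p.1]? = (A s)[p.1 % L]? := by
        rw [getElem?_flatten_map L hL A hA a p.1, hp'.2.1, hsa]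
        rfl
      have hflatB : (b.map A).flatten[p.2]? = (A t)[p.2 % L]? := by
        rw [getElem?_flatten_map L hL A hA b p.2, hp'.2.2, htb]
        rfl
      rw [hCget, hDget, ← hflatA, ← hflatB]
      exact (hM.1 p (hMcM c hp)).2.2
    obtain ⟨hM', hM'card⟩ := isMatch_image (hMcMatch c)
      (fun r => r % L - u₁ c) (fun r => r % L - u₂ c) hfc hgc hglue
    have hmle : (Mc c).card ≤ maxMatch C D := by
      rw [← hM'card]
      exact card_le_maxMatch hM'
    by_cases hsmall : ((x c : ℝ) < (L : ℝ) / R ∨ ((y c : ℝ) < (L : ℝ) / R))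
    · have hmx' : ((Mc c).card : ℝ) ≤ (x c : ℝ) := Nat.cast_le.mpr (hmx c hcW)
      have hmy' : ((Mc c).card : ℝ) ≤ (y c : ℝ) := Nat.cast_le.mpr (hmy c hcW)
      have hmlt : ((Mc c).card : ℝ) < (L : ℝ) / R := by
        rcases hsmall with h | h
        · exact lt_of_le_of_lt hmx' h
        · exact lt_of_le_of_lt hmy' h
      exact arith_small α ((L : ℝ)/R) _ _ _ hmx' hmy' hmlt.le hα0.le
        (by linarith only [hα7])
    · push_neg at hsmall
      obtain ⟨hxbig, hybig⟩ := hsmall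
      have hCB : (L : ℝ) / R ≤ (C.length : ℝ) := by rw [hClen]; exact hxbig
      have hDB : (L : ℝ) / R ≤ (D.length : ℝ) := by rw [hDlen]; exact hybig
      have hmem_s : s ∈ a := by rw [hs_def]; exact List.getElem_mem _
      have hmem_t : t ∈ b := by rw [ht_def]; exact List.getElem_mem _
      have hfb := hsep s hmem_s t hmem_t hst C D hCinf hDinf hCB hDB
      rw [fbar, hClen, hDlen] at hfb
      have hx1' : (1 : ℝ) ≤ (x c : ℝ) := by exact_mod_cast hx1
      have hy1' : (1 : ℝ) ≤ (y c : ℝ) := by exact_mod_cast hy1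
      have hxy0 : (0 : ℝ) < (x c : ℝ) + (y c : ℝ) := by linarith only [hx1', hy1']
      have h2 : 2 * ((maxMatch C D : ℕ) : ℝ) ≤ (1 - α) * ((x c : ℝ) + (y c : ℝ)) := by
        have h3 : 2 * ((maxMatch C D : ℕ) : ℝ) / ((x c : ℝ) + (y c : ℝ)) ≤ 1 - α := by
          linarith only [hfb]
        have := (div_le_iff₀ hxy0).mp h3
        linarith only [this]
      have hm' : ((Mc c).card : ℝ) ≤ ((maxMatch C D : ℕ) : ℝ) := Nat.cast_le.mpr hmle
      exact arith_big α _ _ _ _ (α * ((L : ℝ)/R)) hm' h2 (by positivity)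
  -- sum the bad-cell bounds
  have hSbR : ((∑ c ∈ Wb, (Mc c).card : ℕ) : ℝ)
      ≤ (1 - α)/2 * (((∑ c ∈ Wb, x c : ℕ) : ℝ) + ((∑ c ∈ Wb, y c : ℕ) : ℝ))
        + (Wb.card : ℝ) * (α * ((L : ℝ)/R)) := by
    rw [Nat.cast_sum, Nat.cast_sum, Nat.cast_sum]
    calc ∑ c ∈ Wb, ((Mc c).card : ℝ)
        ≤ ∑ c ∈ Wb, ((1 - α)/2 * ((x c : ℝ) + (y c : ℝ)) + α * ((L : ℝ)/R)) :=
          Finset.sum_le_sum hbad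
      _ = (1 - α)/2 * ((∑ c ∈ Wb, (x c : ℝ)) + (∑ c ∈ Wb, (y c : ℝ)))
          + (Wb.card : ℝ) * (α * ((L : ℝ)/R)) := by
          rw [Finset.sum_add_distrib, Finset.sum_const, nsmul_eq_mul, ← Finset.mul_sum,
            Finset.sum_add_distrib]
  have hBle : (Wb.card : ℝ) ≤ (n : ℝ) + (m : ℝ) - 1 := by
    have h1 : Wb.card ≤ n + m - 1 := le_trans (Finset.card_le_card hWbW) hWcard
    have h2 : (Wb.card : ℝ) ≤ ((n + m - 1 : ℕ) : ℝ) := Nat.cast_le.mpr h1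
    rw [Nat.cast_sub (by omega), Nat.cast_add, Nat.cast_one] at h2
    exact h2
  have hKfin : ((M.card : ℕ) : ℝ)
      < (1 - α + 1/R) * (((n : ℝ) + (m : ℝ)) * (L : ℝ))/2 + α * ((k : ℝ) * (L : ℝ)) := by
    refine arith_final α R (n : ℝ) (m : ℝ) (L : ℝ) ((M.card : ℕ) : ℝ)
      ((∑ c ∈ Wg, (Mc c).card : ℕ) : ℝ) ((∑ c ∈ Wb, (Mc c).card : ℕ) : ℝ)
      ((∑ c ∈ Wb, x c : ℕ) : ℝ) ((∑ c ∈ Wb, y c : ℕ) : ℝ) ((Wb.card : ℕ) : ℝ) ((k : ℕ) : ℝ)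
      ?_ hSbR ?_ ?_ ?_ hBle ?_ hα0 hα7 hR ?_ ?_ ?_
    · exact_mod_cast congrArg (Nat.cast (R := ℝ)) hKgb
    · exact_mod_cast hgx
    · exact_mod_cast hgy
    · exact_mod_cast hSg
    · exact Nat.cast_nonneg _
    · exact_mod_cast hn
    · exact_mod_cast hm
    · exact_mod_cast hL
  have hfb1 : fbar (a.map A).flatten (b.map A).flatten
      = 1 - 2*((M.card : ℕ) : ℝ)/(((n : ℝ) + (m : ℝ)) * (L : ℝ)) := by
    simp only [fbar]
    rw [← hMcard, hlenA, hlenB]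
    have e : ((n*L : ℕ) : ℝ) + ((m*L : ℕ) : ℝ) = ((n : ℝ) + (m : ℝ)) * (L : ℝ) := by
      push_cast
      ring
    rw [e]
  have hfb2 : fbar a b = 1 - 2*((k : ℕ) : ℝ)/((n : ℝ) + (m : ℝ)) := by
    simp only [fbar]
    rfl
  rw [hfb1, hfb2]
  have hq0 : (0:ℝ) < (n : ℝ) + (m : ℝ) := by
    have h1 : (1:ℝ) ≤ (n : ℝ) := by exact_mod_cast hn
    have h2 : (0:ℝ) ≤ (m : ℝ) := Nat.cast_nonneg _
    linarith only [h1, h2]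
  have hL0 : (0:ℝ) < (L : ℝ) := by exact_mod_cast hL
  exact arith_conv α R ((n : ℝ) + (m : ℝ)) (L : ℝ) ((M.card : ℕ) : ℝ) ((k : ℕ) : ℝ)
    hq0 hL0 hR0 hKfin
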